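/- For |q|<1 and parameters in the region of validity, ₂φ₁ satisfies the three-term relation ₂φ₁(aq², bq²; cq²; q, x) = −[(1−cq)(1−c−bx−a(1−b−bq)x) / ((1−aq)(1−bq)(c−abxq)x)] · ₂φ₁(aq, bq; cq; q, x) + [(1−c)(1−cq) / ((1−aq)(1−bq)(c−abxq)x)] · ₂φ₁(a, b; c; q, x). -/

import Mathlib

open scoped BigOperators

/-- q-shifted factorial (a;q)_j -/
noncomputable def qPoch (a q : ℂ) (j : ℕ) : ℂ :=
  ∏ i ∈ Finset.range j, (1 - a * q ^ i)

/-- infinite q-shifted factorial (a;q)_∞ -/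
noncomputable def qPochInf (a q : ℂ) : ℂ :=
  ∏' j : ℕ, (1 - a * q ^ j)

/-- basic hypergeometric series ₁φ₁(a; c; q, x) -/
noncomputable def phi11 (a c q x : ℂ) : ℂ :=
  ∑' j : ℕ, qPoch a q j / (qPoch q q j * qPoch c q j) *
    (-1) ^ j * q ^ (j * (j - 1) / 2) * x ^ j

/-- basic hypergeometric series ₀φ₁(–; c; q, x) -/
noncomputable def phi01 (c q x : ℂ) : ℂ :=
  ∑' j : ℕ, q ^ (j * (j - 1)) * x ^ j / (qPoch q q j * qPoch c q j)

/-- basic hypergeometric series ₂φ₁(a, b; c; q, x) -/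
noncomputable def phi21 (a b c q x : ℂ) : ℂ :=
  ∑' j : ℕ, qPoch a q j * qPoch b q j / (qPoch q q j * qPoch c q j) * x ^ j

open Filter Topology

lemma qPoch_zero (a q : ℂ) : qPoch a q 0 = 1 := by simp [qPoch]

lemma qPoch_succ (a q : ℂ) (j : ℕ) :
    qPoch a q (j + 1) = qPoch a q j * (1 - a * q ^ j) := Finset.prod_range_succ _ _

lemma qPoch_succ' (a q : ℂ) (j : ℕ) :
    qPoch a q (j + 1) = (1 - a) * qPoch (a * q) q j := by
  unfold qPoch
  rw [Finset.prod_range_succ']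
  have h : ∀ i : ℕ, 1 - a * q ^ (i + 1) = 1 - a * q * q ^ i := fun i => by ring
  simp only [h, pow_zero, mul_one]
  rw [mul_comm]

lemma one_sub_ne_zero {z : ℂ} (h : ‖z‖ < 1) : (1 : ℂ) - z ≠ 0 := by
  intro h0
  rw [sub_eq_zero] at h0
  rw [← h0] at h
  simp at h

lemma norm_q_mul_pow_lt_one {q : ℂ} (hq : ‖q‖ < 1) (i : ℕ) : ‖q * q ^ i‖ < 1 := by
  calc ‖q * q ^ i‖ = ‖q‖ * ‖q‖ ^ i := by rw [norm_mul, norm_pow]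
  _ ≤ ‖q‖ * 1 := mul_le_mul_of_nonneg_left (pow_le_one₀ (norm_nonneg q) hq.le) (norm_nonneg q)
  _ < 1 := by simpa using hq

lemma qPoch_q_ne_zero {q : ℂ} (hq : ‖q‖ < 1) (j : ℕ) : qPoch q q j ≠ 0 :=
  Finset.prod_ne_zero_iff.2 fun i _ => one_sub_ne_zero (norm_q_mul_pow_lt_one hq i)

lemma qPoch_ne_zero_of_hc {c q : ℂ} (hc : ∀ n : ℕ, c * q ^ n ≠ 1) (j : ℕ) :
    qPoch c q j ≠ 0 :=
  Finset.prod_ne_zero_iff.2 fun i _ => sub_ne_zero.2 fun h => hc i h.symm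

lemma hc_shift {c q : ℂ} (hc : ∀ n : ℕ, c * q ^ n ≠ 1) (k : ℕ) :
    ∀ n : ℕ, c * q ^ k * q ^ n ≠ 1 := fun n => by
  have := hc (k + n); rwa [pow_add, ← mul_assoc] at this

noncomputable def Tm (a b c q x : ℂ) (j : ℕ) : ℂ :=
  qPoch a q j * qPoch b q j / (qPoch q q j * qPoch c q j) * x ^ j

lemma Tm_succ {q c : ℂ} (hq : ‖q‖ < 1) (hc : ∀ n : ℕ, c * q ^ n ≠ 1)
    (a b x : ℂ) (j : ℕ) :
    Tm a b c q x (j + 1)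
      = Tm a b c q x j *
        ((1 - a * q ^ j) * (1 - b * q ^ j) * x / ((1 - q * q ^ j) * (1 - c * q ^ j))) := by
  unfold Tm
  rw [qPoch_succ, qPoch_succ, qPoch_succ, qPoch_succ]
  have h1 : qPoch q q j ≠ 0 := qPoch_q_ne_zero hq j
  have h2 : qPoch c q j ≠ 0 := qPoch_ne_zero_of_hc hc j
  have h3 : (1 : ℂ) - q * q ^ j ≠ 0 := one_sub_ne_zero (norm_q_mul_pow_lt_one hq j)
  have h4 : (1 : ℂ) - c * q ^ j ≠ 0 := sub_ne_zero.2 fun h => hc j h.symm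
  field_simp
  ring

lemma summable_Tm {q x c : ℂ} (hq : ‖q‖ < 1) (hx : ‖x‖ < 1)
    (hc : ∀ n : ℕ, c * q ^ n ≠ 1) (a b : ℂ) : Summable (Tm a b c q x) := by
  have hr1 : (‖x‖ + 1) / 2 < 1 := by linarith
  have hxr : ‖x‖ < (‖x‖ + 1) / 2 := by linarith
  apply summable_of_ratio_norm_eventually_le hr1
  have hpow : Tendsto (fun j : ℕ => (q : ℂ) ^ j) atTop (𝓝 0) :=
    tendsto_pow_atTop_nhds_zero_of_norm_lt_one hq
  have hct : ContinuousAt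
      (fun t : ℂ => (1 - a * t) * (1 - b * t) * x / ((1 - q * t) * (1 - c * t))) 0 := by
    apply ContinuousAt.div
    · fun_prop
    · fun_prop
    · norm_num
  have hcont := hct.tendsto.comp hpow
  simp only [Function.comp_def] at hcont
  norm_num at hcont
  have hnorm := hcont.norm
  filter_upwards [hnorm.eventually_lt_const hxr] with j hj
  rw [Tm_succ hq hc a b x j, norm_mul, mul_comm]
  exact mul_le_mul_of_nonneg_right hj.le (norm_nonneg _)

def shf (f : ℕ → ℂ) : ℕ → ℂ
  | 0 => 0
  | n + 1 => f n

lemma hasSum_shf {f : ℕ → ℂ} {S : ℂ} (h : HasSum f S) : HasSum (shf f) S := by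
  have h1 : HasSum (fun n => shf f (n + 1)) S := h
  have h2 := (hasSum_nat_add_iff (f := shf f) 1).mp h1
  simpa [shf] using h2

lemma qPoch_shift_one (a q : ℂ) (m : ℕ) :
    qPoch (a * q) q (m + 1) = (1 - a * q) * qPoch (a * q ^ 2) q m := by
  rw [qPoch_succ']
  rw [show a * q * q = a * q ^ 2 from by ring]

lemma qPoch_shift_two (a q : ℂ) (m : ℕ) :
    qPoch a q (m + 2) = (1 - a) * ((1 - a * q) * qPoch (a * q ^ 2) q m) := by
  rw [show m + 2 = (m + 1) + 1 from rfl, qPoch_succ', qPoch_shift_one]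


lemma Tm_mul {q c : ℂ} (a b x : ℂ) (j : ℕ) (hQ : qPoch q q j ≠ 0)
    (hC : qPoch c q j ≠ 0) :
    qPoch q q j * qPoch c q j * Tm a b c q x j
      = qPoch a q j * qPoch b q j * x ^ j := by
  unfold Tm
  field_simp

set_option maxHeartbeats 2000000 in
lemma coeff_zero {q a b c x : ℂ} (hq : ‖q‖ < 1) (hc : ∀ n : ℕ, c * q ^ n ≠ 1)
    (n : ℕ) :
    c * ((1 - a * q) * (1 - b * q)) *
        shf (fun j => Tm (a * q ^ 2) (b * q ^ 2) (c * q ^ 2) q x j * x) n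
      - a * b * q * ((1 - a * q) * (1 - b * q)) *
        shf (shf (fun j => Tm (a * q ^ 2) (b * q ^ 2) (c * q ^ 2) q x j * (x * x))) n
      - (1 - c) * (1 - c * q) * Tm a b c q x n
      + (1 - c) * (1 - c * q) * Tm (a * q) (b * q) (c * q) q x n
      - (1 - c * q) * (a + b - a * b - a * b * q) *
        shf (fun j => Tm (a * q) (b * q) (c * q) q x j * x) n = 0 := by
  have hq1 : (1 : ℂ) - q ≠ 0 := one_sub_ne_zero hq
  have hc0 : (1 : ℂ) - c ≠ 0 := sub_ne_zero.2 fun h => hc 0 (by simpa using h.symm)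
  have hc1 : (1 : ℂ) - c * q ≠ 0 := sub_ne_zero.2 fun h => hc 1 (by simpa using h.symm)
  have hc1' : ∀ k : ℕ, c * q * q ^ k ≠ 1 := fun k => by
    have := hc_shift hc 1 k; rwa [pow_one] at this
  have hcq2 : ∀ k : ℕ, c * q ^ 2 * q ^ k ≠ 1 := hc_shift hc 2
  match n with
  | 0 => simp [shf, Tm, qPoch]
  | 1 =>
    simp only [shf, Tm, qPoch, Finset.prod_range_one, pow_zero, mul_one, pow_one]
    field_simp
    ring
  | (m + 2) =>
    have h3 : (1 : ℂ) - q * q ^ m ≠ 0 := one_sub_ne_zero (norm_q_mul_pow_lt_one hq m)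
    have h4 : (1 : ℂ) - q * (q ^ m * q) ≠ 0 := by
      have := one_sub_ne_zero (norm_q_mul_pow_lt_one hq (m + 1))
      rwa [pow_succ] at this
    have h5 : (1 : ℂ) - c * q ^ 2 * q ^ m ≠ 0 := sub_ne_zero.2 fun h => hcq2 m h.symm
    have hQ2 : qPoch q q (m + 1 + 1) ≠ 0 := qPoch_q_ne_zero hq _
    have hQ1 : qPoch q q (m + 1) ≠ 0 := qPoch_q_ne_zero hq _
    have hQ0 : qPoch q q m ≠ 0 := qPoch_q_ne_zero hq _
    have M0 := Tm_mul (q := q) (c := c) a b x (m + 1 + 1) hQ2 (qPoch_ne_zero_of_hc hc _)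
    have M1b := Tm_mul (q := q) (c := c * q) (a * q) (b * q) x (m + 1 + 1) hQ2
      (qPoch_ne_zero_of_hc hc1' _)
    have M1a := Tm_mul (q := q) (c := c * q) (a * q) (b * q) x (m + 1) hQ1
      (qPoch_ne_zero_of_hc hc1' _)
    have M2a := Tm_mul (q := q) (c := c * q ^ 2) (a * q ^ 2) (b * q ^ 2) x (m + 1) hQ1
      (qPoch_ne_zero_of_hc hcq2 _)
    have M2b := Tm_mul (q := q) (c := c * q ^ 2) (a * q ^ 2) (b * q ^ 2) x m hQ0
      (qPoch_ne_zero_of_hc hcq2 _)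
    rw [qPoch_shift_two a q m, qPoch_shift_two b q m, qPoch_shift_two c q m,
      qPoch_succ q q (m + 1), qPoch_succ q q m, pow_succ x (m + 1), pow_succ x m,
      pow_succ q m] at M0
    rw [qPoch_shift_one a q (m + 1), qPoch_shift_one b q (m + 1), qPoch_shift_one c q (m + 1),
      qPoch_succ (a * q ^ 2) q m, qPoch_succ (b * q ^ 2) q m, qPoch_succ (c * q ^ 2) q m,
      qPoch_succ q q (m + 1), qPoch_succ q q m, pow_succ x (m + 1), pow_succ x m,
      pow_succ q m] at M1b
    rw [qPoch_shift_one a q m, qPoch_shift_one b q m, qPoch_shift_one c q m,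
      qPoch_succ q q m, pow_succ x m] at M1a
    rw [qPoch_succ (a * q ^ 2) q m, qPoch_succ (b * q ^ 2) q m, qPoch_succ (c * q ^ 2) q m,
      qPoch_succ q q m, pow_succ x m] at M2a
    show c * ((1 - a * q) * (1 - b * q)) *
        (Tm (a * q ^ 2) (b * q ^ 2) (c * q ^ 2) q x (m + 1) * x)
      - a * b * q * ((1 - a * q) * (1 - b * q)) *
        (Tm (a * q ^ 2) (b * q ^ 2) (c * q ^ 2) q x m * (x * x))
      - (1 - c) * (1 - c * q) * Tm a b c q x (m + 1 + 1)
      + (1 - c) * (1 - c * q) * Tm (a * q) (b * q) (c * q) q x (m + 1 + 1)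
      - (1 - c * q) * (a + b - a * b - a * b * q) *
        (Tm (a * q) (b * q) (c * q) q x (m + 1) * x) = 0
    have hZ : qPoch q q m * (1 - q * q ^ m) * (1 - q * (q ^ m * q))
        * qPoch (c * q ^ 2) q m * (1 - c) * (1 - c * q) * (1 - c * q ^ 2 * q ^ m) ≠ 0 := by
      exact mul_ne_zero (mul_ne_zero (mul_ne_zero (mul_ne_zero (mul_ne_zero
        (mul_ne_zero hQ0 h3) h4) (qPoch_ne_zero_of_hc hcq2 m)) hc0) hc1) h5
    apply mul_left_cancel₀ hZ
    linear_combination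
      (-(1 - c) * (1 - c * q) * (1 - c * q ^ 2 * q ^ m)) * M0
      + ((1 - c) * (1 - c) * (1 - c * q)) * M1b
      + (-(1 - c * q) * (a + b - a * b - a * b * q) * x * (1 - q * (q ^ m * q)) * (1 - c)
          * (1 - c * q ^ 2 * q ^ m)) * M1a
      + (c * ((1 - a * q) * (1 - b * q)) * x * (1 - q * (q ^ m * q)) * (1 - c) * (1 - c * q))
          * M2a
      + (-(a * b * q) * ((1 - a * q) * (1 - b * q)) * (x * x) * (1 - q * q ^ m)
          * (1 - q * (q ^ m * q)) * (1 - c) * (1 - c * q) * (1 - c * q ^ 2 * q ^ m)) * M2b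

theorem phi21_three_term_relation (q a b c x : ℂ) (hq : ‖q‖ < 1) (hx : ‖x‖ < 1)
    (hc : ∀ n : ℕ, c * q ^ n ≠ 1)
    (ha : a * q ≠ 1) (hb : b * q ≠ 1) (hx0 : x ≠ 0) (hcx : c ≠ a * b * x * q) :
    phi21 (a * q ^ 2) (b * q ^ 2) (c * q ^ 2) q x
      = -((1 - c * q) * (1 - c - b * x - a * (1 - b - b * q) * x)
            / ((1 - a * q) * (1 - b * q) * (c - a * b * x * q) * x))
          * phi21 (a * q) (b * q) (c * q) q x
        + (1 - c) * (1 - c * q) / ((1 - a * q) * (1 - b * q) * (c - a * b * x * q) * x)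
          * phi21 a b c q x := by
  have hc1 : ∀ n : ℕ, c * q * q ^ n ≠ 1 := fun n => by
    have := hc_shift hc 1 n; rwa [pow_one] at this
  have hc2 : ∀ n : ℕ, c * q ^ 2 * q ^ n ≠ 1 := hc_shift hc 2
  have s2 : Summable (Tm (a * q ^ 2) (b * q ^ 2) (c * q ^ 2) q x) := summable_Tm hq hx hc2 _ _
  have s1 : Summable (Tm (a * q) (b * q) (c * q) q x) := summable_Tm hq hx hc1 _ _
  have s0 : Summable (Tm a b c q x) := summable_Tm hq hx hc _ _
  have e2 : phi21 (a * q ^ 2) (b * q ^ 2) (c * q ^ 2) q x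
      = ∑' j, Tm (a * q ^ 2) (b * q ^ 2) (c * q ^ 2) q x j := rfl
  have e1 : phi21 (a * q) (b * q) (c * q) q x = ∑' j, Tm (a * q) (b * q) (c * q) q x j := rfl
  have e0 : phi21 a b c q x = ∑' j, Tm a b c q x j := rfl
  have H2 : HasSum (Tm (a * q ^ 2) (b * q ^ 2) (c * q ^ 2) q x)
      (phi21 (a * q ^ 2) (b * q ^ 2) (c * q ^ 2) q x) := by rw [e2]; exact s2.hasSum
  have H1 : HasSum (Tm (a * q) (b * q) (c * q) q x)
      (phi21 (a * q) (b * q) (c * q) q x) := by rw [e1]; exact s1.hasSum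
  have H0 : HasSum (Tm a b c q x) (phi21 a b c q x) := by rw [e0]; exact s0.hasSum
  have Hg1 : HasSum (shf (fun j => Tm (a * q ^ 2) (b * q ^ 2) (c * q ^ 2) q x j * x))
      (phi21 (a * q ^ 2) (b * q ^ 2) (c * q ^ 2) q x * x) := hasSum_shf (H2.mul_right x)
  have Hg2 : HasSum (shf (shf (fun j => Tm (a * q ^ 2) (b * q ^ 2) (c * q ^ 2) q x j * (x * x))))
      (phi21 (a * q ^ 2) (b * q ^ 2) (c * q ^ 2) q x * (x * x)) :=
    hasSum_shf (hasSum_shf (H2.mul_right (x * x)))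
  have Hg3 : HasSum (shf (fun j => Tm (a * q) (b * q) (c * q) q x j * x))
      (phi21 (a * q) (b * q) (c * q) q x * x) := hasSum_shf (H1.mul_right x)
  have Hbig : HasSum
      (fun n =>
        c * ((1 - a * q) * (1 - b * q)) *
            shf (fun j => Tm (a * q ^ 2) (b * q ^ 2) (c * q ^ 2) q x j * x) n
          - a * b * q * ((1 - a * q) * (1 - b * q)) *
            shf (shf (fun j => Tm (a * q ^ 2) (b * q ^ 2) (c * q ^ 2) q x j * (x * x))) n
          - (1 - c) * (1 - c * q) * Tm a b c q x n
          + (1 - c) * (1 - c * q) * Tm (a * q) (b * q) (c * q) q x n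
          - (1 - c * q) * (a + b - a * b - a * b * q) *
            shf (fun j => Tm (a * q) (b * q) (c * q) q x j * x) n)
      (c * ((1 - a * q) * (1 - b * q)) * (phi21 (a * q ^ 2) (b * q ^ 2) (c * q ^ 2) q x * x)
        - a * b * q * ((1 - a * q) * (1 - b * q)) *
            (phi21 (a * q ^ 2) (b * q ^ 2) (c * q ^ 2) q x * (x * x))
        - (1 - c) * (1 - c * q) * phi21 a b c q x
        + (1 - c) * (1 - c * q) * phi21 (a * q) (b * q) (c * q) q x
        - (1 - c * q) * (a + b - a * b - a * b * q) *
            (phi21 (a * q) (b * q) (c * q) q x * x)) := by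
    exact ((((Hg1.mul_left _).sub (Hg2.mul_left _)).sub (H0.mul_left _)).add
      (H1.mul_left _)).sub (Hg3.mul_left _)
  have hfz : (fun n =>
        c * ((1 - a * q) * (1 - b * q)) *
            shf (fun j => Tm (a * q ^ 2) (b * q ^ 2) (c * q ^ 2) q x j * x) n
          - a * b * q * ((1 - a * q) * (1 - b * q)) *
            shf (shf (fun j => Tm (a * q ^ 2) (b * q ^ 2) (c * q ^ 2) q x j * (x * x))) n
          - (1 - c) * (1 - c * q) * Tm a b c q x n
          + (1 - c) * (1 - c * q) * Tm (a * q) (b * q) (c * q) q x n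
          - (1 - c * q) * (a + b - a * b - a * b * q) *
            shf (fun j => Tm (a * q) (b * q) (c * q) q x j * x) n)
      = (fun _ : ℕ => (0 : ℂ)) := funext (coeff_zero hq hc)
  rw [hfz] at Hbig
  have K := Hbig.unique hasSum_zero
  have hA : (1 : ℂ) - a * q ≠ 0 := sub_ne_zero.2 fun h => ha h.symm
  have hB : (1 : ℂ) - b * q ≠ 0 := sub_ne_zero.2 fun h => hb h.symm
  have hC : c - a * b * x * q ≠ 0 := sub_ne_zero.2 hcx
  have hD : (1 - a * q) * (1 - b * q) * (c - a * b * x * q) * x ≠ 0 :=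
    mul_ne_zero (mul_ne_zero (mul_ne_zero hA hB) hC) hx0
  rw [neg_mul, div_mul_eq_mul_div, div_mul_eq_mul_div, ← neg_div, ← add_div, eq_div_iff hD]
  linear_combination K
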